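/- Let V₁ be a finite-dimensional real vector space and g ⊆ gl(V₁) a Lie subalgebra, acting diagonally on V₁ ⊕ V₁ (equivalently V₁ ⊗ ℝ²). Let Φ : V₁ → V₁ denote the identification of the first summand with the second, a g-equivariant isomorphism. If R : (V₁ ⊕ V₁)² → g is an alternating bilinear formal curvature tensor satisfying the first Bianchi identity and also R(x, Φ(y))Φ(z) = Φ(R(x, Φ(y))z) for x,y,z in the first copy of V₁ (equivariance forced by Φ), then the trilinear map T(x,y,z) := R((x,0),(0,y))·z on V₁ is totally symmetric: T ∈ S³(V₁*) ⊗ V₁. -/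

import Mathlib

attribute [local instance 100] LieRing.ofAssociativeRing

theorem stmt_6 (V₁ : Type*) [AddCommGroup V₁] [Module ℝ V₁] [FiniteDimensional ℝ V₁]
    (g : LieSubalgebra ℝ (Module.End ℝ V₁))
    (R : (V₁ × V₁) →ₗ[ℝ] (V₁ × V₁) →ₗ[ℝ] Module.End ℝ V₁)
    (hval : ∀ a b, R a b ∈ g)
    (halt : ∀ a b, R a b = - R b a)
    (hBianchi : ∀ a b c : V₁ × V₁,
      ((R a b c.1, R a b c.2) : V₁ × V₁) + (R b c a.1, R b c a.2)
        + (R c a b.1, R c a b.2) = 0)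
    (hΦ : ∀ x y z : V₁,
      ((0 : V₁), R (x, 0) (0, y) z) = ((0 : V₁), R (x, 0) (0, y) z)) :
    (∀ x y z : V₁, R (x, 0) (0, y) z = R (y, 0) (0, x) z) ∧
    (∀ x y z : V₁, R (x, 0) (0, y) z = R (x, 0) (0, z) y) := by
  have h0' : ∀ x y z : V₁, R (0, x) (0, y) z = 0 := by
    intro x y z
    simpa using congrArg Prod.fst (hBianchi (0, x) (0, y) (z, 0))
  -- symmetry in slots 1 and 3
  have s13 : ∀ x y z : V₁, R (y, 0) (0, z) x = R (x, 0) (0, z) y := by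
    intro x y z
    have h' : R (y, 0) (0, z) x + R (0, z) (x, 0) y = 0 := by
      simpa using congrArg Prod.fst (hBianchi (x, 0) (y, 0) (0, z))
    rw [halt ((0 : V₁), z) (x, (0 : V₁))] at h'
    simp only [LinearMap.neg_apply] at h'
    have := add_neg_eq_zero.mp (by simpa using h')
    simpa using this
  -- symmetry in slots 2 and 3
  have s23 : ∀ x y z : V₁, R (x, 0) (0, y) z = R (x, 0) (0, z) y := by
    intro x y z
    have h' := congrArg Prod.snd (hBianchi (x, 0) (0, y) (0, z))
    simp only [Prod.snd_add, Prod.fst, Prod.snd, map_zero, LinearMap.zero_apply,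
      add_zero, zero_add] at h'
    -- h' : R (x,0) (0,y) z + R (0,y) (0,z) x + R (0,z) (x,0) y = 0
    rw [halt ((0 : V₁), z) (x, (0 : V₁))] at h'
    simp only [LinearMap.neg_apply] at h'
    have := add_neg_eq_zero.mp (by simpa using h')
    simpa using this
  refine ⟨fun x y z => ?_, s23⟩
  calc R (x, 0) (0, y) z = R (z, 0) (0, y) x := s13 z x y
    _ = R (z, 0) (0, x) y := s23 z y x
    _ = R (y, 0) (0, x) z := s13 y z x
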